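/- With F as above satisfying F^t = −F and [F₁, F₂} = P₁₂F₂ − F₂P₁₂ + F₂Q₁₂ − Q₁₂F₂, the following intertwining relations hold: P₁₂F₂ = F₁P₁₂, Q₁₂F₂ = −Q₁₂F₁, and F₁Q₁₂ = −F₂Q₁₂. -/

import Mathlib

/-- The ℤ₂-grading: `[a] = 0` for `a ≤ M`, `[a] = 1` for `a > M` (0-indexed),
with `N = 2n`. -/
def gr (M N : ℕ) (a : Fin (M + N)) : ℕ := if (a : ℕ) < M then 0 else 1

/-- The index involution `ā`: `ā = M+1-a` for `a ≤ M`, `ā = 2M+N+1-a` for `a > M`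
(written 0-indexed). -/
def bar (M N : ℕ) (a : Fin (M + N)) : Fin (M + N) :=
  if h : (a : ℕ) < M then ⟨M - 1 - (a : ℕ), by omega⟩
  else ⟨2 * M + N - 1 - (a : ℕ), by have := a.isLt; omega⟩

/-- Super-transposition `E_{ab}^t = (-1)^{[a]([b]+1)} θ_a θ_b E_{b̄ā}`, extended to
matrices with entries in a superalgebra `A`. -/
noncomputable def stranspA (M N : ℕ) {A : Type*} [Ring A] [Algebra ℂ A]
    (θ : Fin (M + N) → ℂ) (F : Matrix (Fin (M + N)) (Fin (M + N)) A) :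
    Matrix (Fin (M + N)) (Fin (M + N)) A :=
  fun p q =>
    ((-1 : ℂ) ^ (gr M N (bar M N q) * (gr M N (bar M N p) + 1))
        * θ (bar M N q) * θ (bar M N p)) • F (bar M N q) (bar M N p)

/-- The graded permutation operator `P₁₂` as a matrix over `A`. -/
noncomputable def PmatA (M N : ℕ) (A : Type*) [Ring A] [Algebra ℂ A] :
    Matrix (Fin (M + N) × Fin (M + N)) (Fin (M + N) × Fin (M + N)) A :=
  fun p q => if p.1 = q.2 ∧ p.2 = q.1
    then ((-1 : ℂ) ^ (gr M N q.1 * gr M N q.2)) • (1 : A) else 0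

/-- The matrix `Q₁₂ = P₁₂^{t₁}` (partial super-transposition in the first factor,
with the Koszul sign of the graded tensor product taken into account). -/
noncomputable def QmatA (M N : ℕ) (A : Type*) [Ring A] [Algebra ℂ A]
    (θ : Fin (M + N) → ℂ) :
    Matrix (Fin (M + N) × Fin (M + N)) (Fin (M + N) × Fin (M + N)) A :=
  fun p q =>
    ((-1 : ℂ) ^ (gr M N (bar M N q.1) * (gr M N (bar M N p.1) + 1))
        * θ (bar M N q.1) * θ (bar M N p.1)
        * (-1 : ℂ) ^ ((gr M N p.2 + gr M N q.2)
            * (gr M N (bar M N q.1) + gr M N (bar M N p.1))))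
      • PmatA M N A (bar M N q.1, p.2) (bar M N p.1, q.2)

/-- `F₁ = F ⊗ I` on the graded tensor square. -/
def emb1 (M N : ℕ) {A : Type*} [Ring A]
    (F : Matrix (Fin (M + N)) (Fin (M + N)) A) :
    Matrix (Fin (M + N) × Fin (M + N)) (Fin (M + N) × Fin (M + N)) A :=
  fun p q => if p.2 = q.2 then F p.1 q.1 else 0

/-- `F₂ = I ⊗ F` on the graded tensor square (with the Koszul sign for an even
matrix `F` with homogeneous entries). -/
noncomputable def emb2 (M N : ℕ) {A : Type*} [Ring A] [Algebra ℂ A]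
    (F : Matrix (Fin (M + N)) (Fin (M + N)) A) :
    Matrix (Fin (M + N) × Fin (M + N)) (Fin (M + N) × Fin (M + N)) A :=
  fun p q => if p.1 = q.1
    then ((-1 : ℂ) ^ ((gr M N p.2 + gr M N q.2) * gr M N q.1)) • F p.2 q.2 else 0

/-- for an even matrix `F` with `F^t = −F` satisfying the
`osp(M|2n)` relation `[F₁,F₂} = P₁₂F₂ − F₂P₁₂ + F₂Q₁₂ − Q₁₂F₂`, the intertwining
relations `P₁₂F₂ = F₁P₁₂`, `Q₁₂F₂ = −Q₁₂F₁` and `F₁Q₁₂ = −F₂Q₁₂` hold. -/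
lemma gr_cases (M N : ℕ) (a : Fin (M + N)) : gr M N a = 0 ∨ gr M N a = 1 := by
  unfold gr; split <;> simp
lemma bar_val (M N : ℕ) (a : Fin (M + N)) :
    (bar M N a : ℕ) = if (a : ℕ) < M then M - 1 - (a : ℕ) else 2 * M + N - 1 - (a : ℕ) := by
  unfold bar; split_ifs <;> rfl
lemma gr_bar (M N : ℕ) (a : Fin (M + N)) : gr M N (bar M N a) = gr M N a := by
  have := a.isLt; unfold gr; rw [bar_val]; split_ifs <;> first | rfl | omega
lemma bar_bar (M N : ℕ) (a : Fin (M + N)) : bar M N (bar M N a) = a := by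
  have := a.isLt; apply Fin.ext
  rw [bar_val M N (bar M N a), bar_val M N a]
  split_ifs <;> omega

section prods
variable {M N : ℕ} {A : Type*} [Ring A] [Algebra ℂ A]

lemma P_mul_apply (X : Matrix (Fin (M+N) × Fin (M+N)) (Fin (M+N) × Fin (M+N)) A) (p q) :
    (PmatA M N A * X) p q = ((-1:ℂ)^(gr M N p.1 * gr M N p.2)) • X (p.2, p.1) q := by
  rw [Matrix.mul_apply]
  rw [Fintype.sum_eq_single (p.2, p.1) ?_]
  · simp [PmatA, smul_mul_assoc, Nat.mul_comm]
  · intro r hr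
    have h : ¬(p.1 = r.2 ∧ p.2 = r.1) := by
      rintro ⟨h1, h2⟩; exact hr (Prod.ext h2.symm h1.symm)
    simp [PmatA, h]

lemma mul_P_apply (X : Matrix (Fin (M+N) × Fin (M+N)) (Fin (M+N) × Fin (M+N)) A) (p q) :
    (X * PmatA M N A) p q = ((-1:ℂ)^(gr M N q.1 * gr M N q.2)) • X p (q.2, q.1) := by
  rw [Matrix.mul_apply]
  rw [Fintype.sum_eq_single (q.2, q.1) ?_]
  · simp [PmatA, mul_smul_comm]
  · intro r hr
    have h : ¬(r.1 = q.2 ∧ r.2 = q.1) := by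
      rintro ⟨h1, h2⟩; exact hr (Prod.ext h1 h2)
    simp [PmatA, h]

lemma Q_apply (θ : Fin (M+N) → ℂ) (p r : Fin (M+N) × Fin (M+N)) :
    QmatA M N A θ p r =
      if p.2 = bar M N p.1 ∧ r.2 = bar M N r.1 then
        ((-1:ℂ)^(gr M N p.1) * θ (bar M N r.1) * θ (bar M N p.1)) • (1:A) else 0 := by
  unfold QmatA PmatA
  by_cases h1 : p.2 = bar M N p.1 <;> by_cases h2 : r.2 = bar M N r.1 <;>
    simp only [h1, h2, and_true, and_false, false_and, if_true, if_false, smul_zero,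
      gr_bar, bar_bar]
  · rw [smul_smul]
    congr 1
    rcases gr_cases M N p.1 with g1 | g1 <;> rcases gr_cases M N r.1 with g2 | g2 <;>
      rw [g1, g2] <;> norm_num
  · rw [if_neg (fun hc => h2 hc.symm), smul_zero]
end prods

section prods2
variable {M N : ℕ} {A : Type*} [Ring A] [Algebra ℂ A]

lemma Q_mul_emb2_apply (θ : Fin (M+N) → ℂ) (F : Matrix (Fin (M+N)) (Fin (M+N)) A)
    (p q : Fin (M+N) × Fin (M+N)) :
    (QmatA M N A θ * emb2 M N F) p q =
      if p.2 = bar M N p.1 then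
        ((-1:ℂ)^(gr M N p.1) * θ (bar M N q.1) * θ (bar M N p.1)
          * (-1:ℂ)^((gr M N q.1 + gr M N q.2) * gr M N q.1)) • F (bar M N q.1) q.2
      else 0 := by
  rw [Matrix.mul_apply, Fintype.sum_eq_single (q.1, bar M N q.1) ?_]
  · rw [Q_apply]
    by_cases h : p.2 = bar M N p.1
    · rw [if_pos ⟨h, rfl⟩, if_pos h]
      have he : emb2 M N F (q.1, bar M N q.1) q
          = ((-1:ℂ)^((gr M N (bar M N q.1) + gr M N q.2) * gr M N q.1)) • F (bar M N q.1) q.2 := by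
        simp [emb2]
      rw [he, smul_mul_assoc, one_mul, smul_smul, gr_bar]
    · rw [if_neg (by tauto), if_neg h, zero_mul]
  · intro r hr
    rw [Q_apply]
    by_cases h2 : r.1 = q.1
    · have hne : ¬ r.2 = bar M N r.1 := fun hc => hr (Prod.ext h2 (by rw [hc, h2]))
      rw [if_neg (by tauto), zero_mul]
    · have h0 : emb2 M N F r q = 0 := by simp [emb2, h2]
      rw [h0, mul_zero]

lemma Q_mul_emb1_apply (θ : Fin (M+N) → ℂ) (F : Matrix (Fin (M+N)) (Fin (M+N)) A)
    (p q : Fin (M+N) × Fin (M+N)) :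
    (QmatA M N A θ * emb1 M N F) p q =
      if p.2 = bar M N p.1 then
        ((-1:ℂ)^(gr M N p.1) * θ q.2 * θ (bar M N p.1)) • F (bar M N q.2) q.1
      else 0 := by
  rw [Matrix.mul_apply, Fintype.sum_eq_single (bar M N q.2, q.2) ?_]
  · rw [Q_apply]
    by_cases h : p.2 = bar M N p.1
    · rw [if_pos ⟨h, (bar_bar M N q.2).symm⟩, if_pos h]
      have he : emb1 M N F (bar M N q.2, q.2) q = F (bar M N q.2) q.1 := by
        simp [emb1]
      rw [he, smul_mul_assoc, one_mul, bar_bar]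
    · rw [if_neg (by tauto), if_neg h, zero_mul]
  · intro r hr
    rw [Q_apply]
    by_cases h2 : r.2 = q.2
    · have hne : ¬ r.2 = bar M N r.1 := by
        intro hc
        apply hr
        have : r.1 = bar M N q.2 := by rw [← h2, hc, bar_bar]
        exact Prod.ext this h2
      rw [if_neg (by tauto), zero_mul]
    · have h0 : emb1 M N F r q = 0 := by simp [emb1, h2]
      rw [h0, mul_zero]

lemma emb1_mul_Q_apply (θ : Fin (M+N) → ℂ) (F : Matrix (Fin (M+N)) (Fin (M+N)) A)
    (p q : Fin (M+N) × Fin (M+N)) :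
    (emb1 M N F * QmatA M N A θ) p q =
      if q.2 = bar M N q.1 then
        ((-1:ℂ)^(gr M N p.2) * θ (bar M N q.1) * θ p.2) • F p.1 (bar M N p.2)
      else 0 := by
  rw [Matrix.mul_apply, Fintype.sum_eq_single (bar M N p.2, p.2) ?_]
  · rw [Q_apply]
    by_cases h : q.2 = bar M N q.1
    · rw [if_pos ⟨(bar_bar M N p.2).symm, h⟩, if_pos h]
      have he : emb1 M N F p (bar M N p.2, p.2) = F p.1 (bar M N p.2) := by
        simp [emb1]
      rw [he, mul_smul_comm, mul_one, gr_bar, bar_bar]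
    · rw [if_neg (by tauto), if_neg h, mul_zero]
  · intro r hr
    rw [Q_apply]
    by_cases h2 : p.2 = r.2
    · have hne : ¬ r.2 = bar M N r.1 := by
        intro hc
        apply hr
        have : r.1 = bar M N p.2 := by rw [h2, hc, bar_bar]
        exact Prod.ext this h2.symm
      rw [if_neg (by tauto), mul_zero]
    · have h0 : emb1 M N F p r = 0 := by simp [emb1, h2]
      rw [h0, zero_mul]

lemma emb2_mul_Q_apply (θ : Fin (M+N) → ℂ) (F : Matrix (Fin (M+N)) (Fin (M+N)) A)
    (p q : Fin (M+N) × Fin (M+N)) :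
    (emb2 M N F * QmatA M N A θ) p q =
      if q.2 = bar M N q.1 then
        ((-1:ℂ)^((gr M N p.2 + gr M N p.1) * gr M N p.1)
          * ((-1:ℂ)^(gr M N p.1) * θ (bar M N q.1) * θ (bar M N p.1))) • F p.2 (bar M N p.1)
      else 0 := by
  rw [Matrix.mul_apply, Fintype.sum_eq_single (p.1, bar M N p.1) ?_]
  · rw [Q_apply]
    by_cases h : q.2 = bar M N q.1
    · rw [if_pos ⟨rfl, h⟩, if_pos h]
      have he : emb2 M N F p (p.1, bar M N p.1)
          = ((-1:ℂ)^((gr M N p.2 + gr M N (bar M N p.1)) * gr M N p.1)) • F p.2 (bar M N p.1) := by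
        simp [emb2]
      rw [he, mul_smul_comm, mul_one, smul_smul, gr_bar]
      rw [show (p.1, bar M N p.1).1 = p.1 from rfl]
      congr 1
      ring
    · rw [if_neg (by tauto), if_neg h, mul_zero]
  · intro r hr
    rw [Q_apply]
    by_cases h2 : p.1 = r.1
    · have hne : ¬ r.2 = bar M N r.1 := by
        intro hc
        apply hr
        exact Prod.ext h2.symm (by rw [hc, ← h2])
      rw [if_neg (by tauto), mul_zero]
    · have h0 : emb2 M N F p r = 0 := by simp [emb2, h2]
      rw [h0, zero_mul]

lemma P_mul_emb2_apply (F : Matrix (Fin (M+N)) (Fin (M+N)) A)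
    (p q : Fin (M+N) × Fin (M+N)) :
    (PmatA M N A * emb2 M N F) p q =
      if p.2 = q.1 then
        ((-1:ℂ)^(gr M N p.1 * gr M N p.2)
          * (-1:ℂ)^((gr M N p.1 + gr M N q.2) * gr M N q.1)) • F p.1 q.2
      else 0 := by
  rw [P_mul_apply]
  by_cases h : p.2 = q.1
  · have he : emb2 M N F (p.2, p.1) q
        = ((-1:ℂ)^((gr M N p.1 + gr M N q.2) * gr M N q.1)) • F p.1 q.2 := by
      simp [emb2, h]
    rw [he, smul_smul, if_pos h]
  · have he : emb2 M N F (p.2, p.1) q = 0 := by simp [emb2, h]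
    rw [he, smul_zero, if_neg h]

lemma emb1_mul_P_apply (F : Matrix (Fin (M+N)) (Fin (M+N)) A)
    (p q : Fin (M+N) × Fin (M+N)) :
    (emb1 M N F * PmatA M N A) p q =
      if p.2 = q.1 then ((-1:ℂ)^(gr M N q.1 * gr M N q.2)) • F p.1 q.2
      else 0 := by
  rw [mul_P_apply]
  by_cases h : p.2 = q.1
  · have he : emb1 M N F p (q.2, q.1) = F p.1 q.2 := by simp [emb1, h]
    rw [he, if_pos h]
  · have he : emb1 M N F p (q.2, q.1) = 0 := by simp [emb1, h]
    rw [he, smul_zero, if_neg h]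

end prods2

set_option maxHeartbeats 2000000 in
theorem osp_intertwining (M n : ℕ) (A : Type*) [Ring A] [Algebra ℂ A]
    (θ : Fin (M + 2 * n) → ℂ) (θ₀ : ℂ)
    (hθ : ∀ a, θ a = 1 ∨ θ a = -1)
    (hθ₀ : ∀ a, (-1 : ℂ) ^ (gr M (2 * n) a) * θ a * θ (bar M (2 * n) a) = θ₀)
    (F : Matrix (Fin (M + 2 * n)) (Fin (M + 2 * n)) A)
    (hFeven : ∀ a b, (gr M (2 * n) a + gr M (2 * n) b) % 2 = 1 → F a b = 0)
    (hFt : stranspA M (2 * n) θ F = -F)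
    (hosp : emb1 M (2 * n) F * emb2 M (2 * n) F - emb2 M (2 * n) F * emb1 M (2 * n) F
      = PmatA M (2 * n) A * emb2 M (2 * n) F - emb2 M (2 * n) F * PmatA M (2 * n) A
        + emb2 M (2 * n) F * QmatA M (2 * n) A θ - QmatA M (2 * n) A θ * emb2 M (2 * n) F) :
    PmatA M (2 * n) A * emb2 M (2 * n) F = emb1 M (2 * n) F * PmatA M (2 * n) A
      ∧ QmatA M (2 * n) A θ * emb2 M (2 * n) F = -(QmatA M (2 * n) A θ * emb1 M (2 * n) F)
      ∧ emb1 M (2 * n) F * QmatA M (2 * n) A θ = -(emb2 M (2 * n) F * QmatA M (2 * n) A θ) := by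
  have hF2 : ∀ a b : Fin (M + 2 * n),
      ((-1:ℂ)^(gr M (2 * n) a * (gr M (2 * n) b + 1)) * θ (bar M (2 * n) a) * θ (bar M (2 * n) b))
        • F (bar M (2 * n) a) (bar M (2 * n) b) = -(F b a) := by
    intro a b
    have h := congrFun (congrFun hFt b) a
    simp only [stranspA, Matrix.neg_apply, gr_bar] at h
    exact h
  refine ⟨?_, ?_, ?_⟩
  · ext p q
    rw [P_mul_emb2_apply, emb1_mul_P_apply]
    by_cases h : p.2 = q.1
    · rw [if_pos h, if_pos h]
      congr 1
      rw [← h]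
      rcases gr_cases M (2 * n) p.1 with a|a <;> rcases gr_cases M (2 * n) p.2 with b|b <;>
        rcases gr_cases M (2 * n) q.2 with c|c <;> rw [a, b, c] <;> norm_num
    · rw [if_neg h, if_neg h]
  · ext p q
    rw [Matrix.neg_apply, Q_mul_emb2_apply, Q_mul_emb1_apply]
    by_cases h : p.2 = bar M (2 * n) p.1
    · rw [if_pos h, if_pos h]
      have hkey := hF2 q.1 (bar M (2 * n) q.2)
      rw [gr_bar, bar_bar] at hkey
      rw [← smul_neg, ← hkey, smul_smul]
      congr 1
      rcases hθ (bar M (2 * n) q.1) with h1|h1 <;> rcases hθ (bar M (2 * n) p.1) with h2|h2 <;>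
        rcases hθ q.2 with h3|h3 <;> rcases gr_cases M (2 * n) q.1 with a|a <;>
        rcases gr_cases M (2 * n) q.2 with b|b <;> rcases gr_cases M (2 * n) p.1 with c|c <;>
        rw [h1, h2, h3, a, b, c] <;> norm_num
    · rw [if_neg h, if_neg h, neg_zero]
  · ext p q
    rw [Matrix.neg_apply, emb1_mul_Q_apply, emb2_mul_Q_apply]
    by_cases h : q.2 = bar M (2 * n) q.1
    · rw [if_pos h, if_pos h]
      have hkey := hF2 (bar M (2 * n) p.1) p.2
      rw [gr_bar, bar_bar] at hkey
      rw [← smul_neg, ← hkey, smul_smul]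
      congr 1
      have hcon : (-1:ℂ)^(gr M (2 * n) p.1) * θ p.1 * θ (bar M (2 * n) p.1)
          = (-1:ℂ)^(gr M (2 * n) p.2) * θ p.2 * θ (bar M (2 * n) p.2) := by
        rw [hθ₀ p.1, hθ₀ p.2]
      rcases hθ (bar M (2 * n) q.1) with h1|h1 <;> rcases hθ (bar M (2 * n) p.1) with h2|h2 <;>
        rcases hθ p.1 with h3|h3 <;> rcases hθ p.2 with h4|h4 <;>
        rcases hθ (bar M (2 * n) p.2) with h5|h5 <;> rcases gr_cases M (2 * n) p.1 with a|a <;>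
        rcases gr_cases M (2 * n) p.2 with b|b <;>
        rw [h2, h3, h4, h5, a, b] at hcon <;> rw [h1, h2, h3, h4, h5, a, b] <;>
        (revert hcon; norm_num)
    · rw [if_neg h, if_neg h, neg_zero]
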